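/- Let (J, u, ω, h, P) be a classical solution of the planar non-resistive MHD system in Lagrangian coordinates on ℝ × (0,T) with J > 0 and ρ₀ > 0 everywhere, with ρ₀ differentiable and all partial derivatives appearing below existing and continuous. Then the transverse effective viscous flux F := μ ∂_y ω / J + h/(4π) satisfies pointwise: ∂_t F − (μ/J) ∂_y( ∂_y F / ρ₀ ) = −(∂_y u / J) F + (1/(4π)) ∂_y ω / J. -/

import Mathlib

open Real MeasureTheory
open scoped InnerProductSpace

noncomputable section

/-- The plane `ℝ²` as a Euclidean space, target of the transverse velocity and
magnetic field. -/
abbrev E2 := EuclideanSpace ℝ (Fin 2)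

/-- Partial derivative in time of a scalar field `f = f(y, t)`. -/
def pdt (f : ℝ → ℝ → ℝ) (y t : ℝ) : ℝ := deriv (fun s => f y s) t

/-- Partial derivative in space of a scalar field `f = f(y, t)`. -/
def pdy (f : ℝ → ℝ → ℝ) (y t : ℝ) : ℝ := deriv (fun z => f z t) y

/-- Partial derivative in time of an `ℝ²`-valued field. -/
def pdtV (f : ℝ → ℝ → E2) (y t : ℝ) : E2 := deriv (fun s => f y s) t

/-- Partial derivative in space of an `ℝ²`-valued field. -/
def pdyV (f : ℝ → ℝ → E2) (y t : ℝ) : E2 := deriv (fun z => f z t) y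

/-- `(J, u, ω, h, P)` is a classical solution of the planar non-resistive MHD system in
Lagrangian coordinates, for times in the set `S`: all the unknowns are twice continuously
differentiable (in particular all partial derivatives appearing in the system exist and
are continuous) and the five equations hold pointwise. -/
structure IsMHDSolution (lam mu gam : ℝ) (ρ₀ : ℝ → ℝ)
    (J u P : ℝ → ℝ → ℝ) (ω h : ℝ → ℝ → E2) (S : Set ℝ) : Prop where
  smooth_J : ContDiffOn ℝ 2 (fun p : ℝ × ℝ => J p.1 p.2) (Set.univ ×ˢ S)
  smooth_u : ContDiffOn ℝ 2 (fun p : ℝ × ℝ => u p.1 p.2) (Set.univ ×ˢ S)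
  smooth_P : ContDiffOn ℝ 2 (fun p : ℝ × ℝ => P p.1 p.2) (Set.univ ×ˢ S)
  smooth_ω : ContDiffOn ℝ 2 (fun p : ℝ × ℝ => ω p.1 p.2) (Set.univ ×ˢ S)
  smooth_h : ContDiffOn ℝ 2 (fun p : ℝ × ℝ => h p.1 p.2) (Set.univ ×ˢ S)
  /-- (i) `∂ₜ J = ∂_y u` -/
  mass : ∀ y : ℝ, ∀ t ∈ S, pdt J y t = pdy u y t
  /-- (ii) `ρ₀ ∂ₜ u − λ ∂_y(∂_y u / J) + ∂_y P + (1/(4π)) h·∂_y h = 0` -/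
  momentum : ∀ y : ℝ, ∀ t ∈ S,
    ρ₀ y * pdt u y t - lam * pdy (fun z s => pdy u z s / J z s) y t
      + pdy P y t + (1 / (4 * π)) * ⟪h y t, pdyV h y t⟫_ℝ = 0
  /-- (iii) `ρ₀ ∂ₜ ω − μ ∂_y(∂_y ω / J) = (1/(4π)) ∂_y h` -/
  momentumT : ∀ y : ℝ, ∀ t ∈ S,
    ρ₀ y • pdtV ω y t - mu • pdyV (fun z s => (J z s)⁻¹ • pdyV ω z s) y t
      = (1 / (4 * π)) • pdyV h y t
  /-- (iv) `∂ₜ h + (∂_y u / J) h − ∂_y ω / J = 0` -/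
  magnetic : ∀ y : ℝ, ∀ t ∈ S,
    pdtV h y t + (pdy u y t / J y t) • h y t - (J y t)⁻¹ • pdyV ω y t = 0
  /-- (v) `∂ₜ P + γ (∂_y u / J) P = (γ−1)(λ (∂_y u / J)² + μ |∂_y ω / J|²)` -/
  pressure : ∀ y : ℝ, ∀ t ∈ S,
    pdt P y t + gam * (pdy u y t / J y t) * P y t
      = (gam - 1) * (lam * (pdy u y t / J y t) ^ 2 + mu * ‖(J y t)⁻¹ • pdyV ω y t‖ ^ 2)


/-- The effective viscous flux `G := λ ∂_y u / J − P − |h|²/(8π)`. -/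
def Gflux (lam : ℝ) (J u P : ℝ → ℝ → ℝ) (h : ℝ → ℝ → E2) : ℝ → ℝ → ℝ := fun y t =>
  lam * pdy u y t / J y t - P y t - ‖h y t‖ ^ 2 / (8 * π)

/-- The transverse effective viscous flux `F := μ ∂_y ω / J + h/(4π)`. -/
def Fflux (mu : ℝ) (J : ℝ → ℝ → ℝ) (ω h : ℝ → ℝ → E2) : ℝ → ℝ → E2 := fun y t =>
  mu • ((J y t)⁻¹ • pdyV ω y t) + (1 / (4 * π)) • h y t

/-- The squared magnetic field `H := |h|²`. -/
def Hfield (h : ℝ → ℝ → E2) : ℝ → ℝ → ℝ := fun y t => ‖h y t‖ ^ 2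

section Helpers

variable {E : Type*} [NormedAddCommGroup E] [NormedSpace ℝ E]

/-- Derivative of the first-variable slice of a function on `ℝ × ℝ`. -/
lemma sliceFst {F : ℝ × ℝ → E} {L : ℝ × ℝ →L[ℝ] E} {y t : ℝ}
    (hF : HasFDerivAt F L (y, t)) : HasDerivAt (fun z => F (z, t)) (L (1, 0)) y := by
  have h1 : HasFDerivAt (fun z : ℝ => ((z, t) : ℝ × ℝ))
      ((ContinuousLinearMap.id ℝ ℝ).prod 0) y :=
    (hasFDerivAt_id y).prodMk (hasFDerivAt_const t y)
  have h2 := (hF.comp y h1).hasDerivAt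
  simpa [Function.comp_def] using h2

/-- Derivative of the second-variable slice of a function on `ℝ × ℝ`. -/
lemma sliceSnd {F : ℝ × ℝ → E} {L : ℝ × ℝ →L[ℝ] E} {y t : ℝ}
    (hF : HasFDerivAt F L (y, t)) : HasDerivAt (fun s => F (y, s)) (L (0, 1)) t := by
  have h1 : HasFDerivAt (fun s : ℝ => ((y, s) : ℝ × ℝ))
      ((0 : ℝ →L[ℝ] ℝ).prod (ContinuousLinearMap.id ℝ ℝ)) t :=
    (hasFDerivAt_const y t).prodMk (hasFDerivAt_id t)
  have h2 := (hF.comp t h1).hasDerivAt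
  simpa [Function.comp_def] using h2

end Helpers

/-- for a classical solution of the planar non-resistive MHD system in
Lagrangian coordinates on `ℝ × (0,T)` with `J > 0` and `ρ₀ > 0`, `ρ₀` differentiable,
the transverse effective viscous flux `F := μ ∂_y ω / J + h/(4π)` satisfies pointwise
`∂ₜ F − (μ/J) ∂_y(∂_y F / ρ₀) = −(∂_y u / J) F + (1/(4π)) ∂_y ω / J`. -/
theorem stmt_4 (T lam mu gam : ℝ) (hT : 0 < T) (hlam : 0 < lam) (hmu : 0 < mu)
    (hgam : 1 < gam) (ρ₀ : ℝ → ℝ) (hρpos : ∀ y : ℝ, 0 < ρ₀ y)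
    (hρdiff : Differentiable ℝ ρ₀)
    (J u P : ℝ → ℝ → ℝ) (ω h : ℝ → ℝ → E2)
    (hJpos : ∀ y : ℝ, ∀ t ∈ Set.Ioo (0 : ℝ) T, 0 < J y t)
    (hsol : IsMHDSolution lam mu gam ρ₀ J u P ω h (Set.Ioo 0 T)) :
    ∀ y : ℝ, ∀ t ∈ Set.Ioo (0 : ℝ) T,
      pdtV (Fflux mu J ω h) y t
          - (mu / J y t) • pdyV (fun z s => (ρ₀ z)⁻¹ • pdyV (Fflux mu J ω h) z s) y t
        = (-(pdy u y t / J y t)) • Fflux mu J ω h y t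
          + (1 / (4 * π)) • ((J y t)⁻¹ • pdyV ω y t) := by
  intro y t ht
  set S : Set ℝ := Set.Ioo (0 : ℝ) T with hS
  have hUopen : IsOpen ((Set.univ : Set ℝ) ×ˢ S) := isOpen_univ.prod isOpen_Ioo
  have hmemU : ∀ z : ℝ, ∀ s ∈ S, ((z, s) : ℝ × ℝ) ∈ (Set.univ : Set ℝ) ×ˢ S :=
    fun z s hs => ⟨trivial, hs⟩
  set Wj : ℝ × ℝ → E2 := fun p => ω p.1 p.2 with hWjdef
  set Hj : ℝ × ℝ → E2 := fun p => h p.1 p.2 with hHjdef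
  set Jj : ℝ × ℝ → ℝ := fun p => J p.1 p.2 with hJjdef
  -- differentiability of the unknowns
  have hWd : ∀ z : ℝ, ∀ s ∈ S, DifferentiableAt ℝ Wj (z, s) := fun z s hs =>
    (hsol.smooth_ω.differentiableOn (by norm_num)).differentiableAt
      (hUopen.mem_nhds (hmemU z s hs))
  have hHd : ∀ z : ℝ, ∀ s ∈ S, DifferentiableAt ℝ Hj (z, s) := fun z s hs =>
    (hsol.smooth_h.differentiableOn (by norm_num)).differentiableAt
      (hUopen.mem_nhds (hmemU z s hs))
  have hJd : ∀ z : ℝ, ∀ s ∈ S, DifferentiableAt ℝ Jj (z, s) := fun z s hs =>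
    (hsol.smooth_J.differentiableOn (by norm_num)).differentiableAt
      (hUopen.mem_nhds (hmemU z s hs))
  -- C¹ regularity, hence differentiability, of the derivative of ω
  have hW1 : ContDiffOn ℝ 1 (fderiv ℝ Wj) ((Set.univ : Set ℝ) ×ˢ S) :=
    hsol.smooth_ω.fderiv_of_isOpen hUopen (by norm_num)
  have hW'd : ∀ z : ℝ, ∀ s ∈ S, DifferentiableAt ℝ (fderiv ℝ Wj) (z, s) := fun z s hs =>
    (hW1.differentiableOn one_ne_zero).differentiableAt (hUopen.mem_nhds (hmemU z s hs))
  -- the spatial and temporal derivatives of ω in terms of the total derivative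
  have hA : ∀ z : ℝ, ∀ s ∈ S, pdyV ω z s = fderiv ℝ Wj (z, s) (1, 0) := fun z s hs =>
    (sliceFst (hWd z s hs).hasFDerivAt).deriv
  have hB : ∀ z : ℝ, ∀ s ∈ S, pdtV ω z s = fderiv ℝ Wj (z, s) (0, 1) := fun z s hs =>
    (sliceSnd (hWd z s hs).hasFDerivAt).deriv
  -- second derivative at (y, t) and its symmetry
  set D2 : ℝ × ℝ →L[ℝ] ℝ × ℝ →L[ℝ] E2 := fderiv ℝ (fderiv ℝ Wj) (y, t) with hD2def
  have hsymm : D2 (1, 0) (0, 1) = D2 (0, 1) (1, 0) := by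
    refine second_derivative_symmetric_of_eventually (f := Wj) ?_ (hW'd y t ht).hasFDerivAt _ _
    filter_upwards [hUopen.mem_nhds (hmemU y t ht)] with q hq
    exact ((hsol.smooth_ω.differentiableOn (by norm_num)).differentiableAt
      (hUopen.mem_nhds hq)).hasFDerivAt
  -- applied derivatives q ↦ fderiv Wj q v, v = (1,0), (0,1)
  have hAv10 : HasFDerivAt (fun q => fderiv ℝ Wj q ((1 : ℝ), (0 : ℝ)))
      ((ContinuousLinearMap.apply ℝ E2 ((1 : ℝ), (0 : ℝ))).comp D2) (y, t) :=
    (ContinuousLinearMap.apply ℝ E2 ((1 : ℝ), (0 : ℝ))).hasFDerivAt.comp _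
      (hW'd y t ht).hasFDerivAt
  have hAv01 : ∀ z : ℝ, HasFDerivAt (fun q => fderiv ℝ Wj q ((0 : ℝ), (1 : ℝ)))
      ((ContinuousLinearMap.apply ℝ E2 ((0 : ℝ), (1 : ℝ))).comp (fderiv ℝ (fderiv ℝ Wj) (z, t)))
      (z, t) := fun z =>
    (ContinuousLinearMap.apply ℝ E2 ((0 : ℝ), (1 : ℝ))).hasFDerivAt.comp _
      (hW'd z t ht).hasFDerivAt
  -- similar for (1,0) at all (z,t)
  have hAv10' : ∀ z : ℝ, HasFDerivAt (fun q => fderiv ℝ Wj q ((1 : ℝ), (0 : ℝ)))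
      ((ContinuousLinearMap.apply ℝ E2 ((1 : ℝ), (0 : ℝ))).comp (fderiv ℝ (fderiv ℝ Wj) (z, t)))
      (z, t) := fun z =>
    (ContinuousLinearMap.apply ℝ E2 ((1 : ℝ), (0 : ℝ))).hasFDerivAt.comp _
      (hW'd z t ht).hasFDerivAt
  -- Step 1: spatial linearity of the derivative of F in the z variable, at every z
  have hKdiff : ∀ z : ℝ, DifferentiableAt ℝ (fun z' => (J z' t)⁻¹ • pdyV ω z' t) z := by
    intro z
    have hEq : (fun z' => (J z' t)⁻¹ • pdyV ω z' t)
        = fun z' => (J z' t)⁻¹ • (fun q => fderiv ℝ Wj q ((1 : ℝ), (0 : ℝ))) (z', t) := by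
      funext z'
      rw [hA z' t ht]
    rw [hEq]
    have hJz : DifferentiableAt ℝ (fun z' => J z' t) z :=
      (sliceFst (hJd z t ht).hasFDerivAt).differentiableAt
    have hAz : DifferentiableAt ℝ
        (fun z' => (fun q => fderiv ℝ Wj q ((1 : ℝ), (0 : ℝ))) (z', t)) z :=
      (sliceFst (hAv10' z)).differentiableAt
    exact (hJz.inv (hJpos z t ht).ne').smul hAz
  have hhdiff : ∀ z : ℝ, DifferentiableAt ℝ (fun z' => h z' t) z := fun z =>
    (sliceFst (hHd z t ht).hasFDerivAt).differentiableAt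
  have step1 : ∀ z : ℝ, pdyV (Fflux mu J ω h) z t
      = mu • pdyV (fun z' s => (J z' s)⁻¹ • pdyV ω z' s) z t + (1 / (4 * π)) • pdyV h z t := by
    intro z
    show deriv (fun z' => mu • ((J z' t)⁻¹ • pdyV ω z' t) + (1 / (4 * π)) • h z' t) z
      = mu • deriv (fun z' => (J z' t)⁻¹ • pdyV ω z' t) z
        + (1 / (4 * π)) • deriv (fun z' => h z' t) z
    rw [deriv_fun_add (f := fun z' => mu • ((J z' t)⁻¹ • pdyV ω z' t))
      (g := fun z' => (1 / (4 * π)) • h z' t) ((hKdiff z).const_smul mu) ((hhdiff z).const_smul (1 / (4 * π))),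
      deriv_fun_const_smul mu (hKdiff z), deriv_fun_const_smul (1 / (4 * π)) (hhdiff z)]
  -- Step 2: the inner spatial derivative equals ρ₀ ∂ₜ ω, hence the weighted one is ∂ₜ ω
  have key : ∀ z : ℝ, (ρ₀ z)⁻¹ • pdyV (Fflux mu J ω h) z t = fderiv ℝ Wj (z, t) (0, 1) := by
    intro z
    have hmom := hsol.momentumT z t ht
    have h1 : pdyV (Fflux mu J ω h) z t = ρ₀ z • pdtV ω z t := by
      rw [step1 z]
      have : mu • pdyV (fun z' s => (J z' s)⁻¹ • pdyV ω z' s) z t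
          = ρ₀ z • pdtV ω z t - (1 / (4 * π)) • pdyV h z t := by
        rw [← hmom]; abel
      rw [this]; abel
    rw [h1, inv_smul_smul₀ (hρpos z).ne', hB z t ht]
  have step2 : pdyV (fun z s => (ρ₀ z)⁻¹ • pdyV (Fflux mu J ω h) z s) y t
      = D2 (1, 0) (0, 1) := by
    show deriv (fun z => (ρ₀ z)⁻¹ • pdyV (Fflux mu J ω h) z t) y = D2 (1, 0) (0, 1)
    have hfun : (fun z => (ρ₀ z)⁻¹ • pdyV (Fflux mu J ω h) z t)
        = fun z => (fun q => fderiv ℝ Wj q ((0 : ℝ), (1 : ℝ))) (z, t) := funext key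
    rw [hfun, (sliceFst (hAv01 y)).deriv]
    rfl
  -- Step 3: the time derivative of F
  have hJt : HasDerivAt (fun s => J y s) (pdy u y t) t := by
    have h1 := sliceSnd (hJd y t ht).hasFDerivAt
    have h2 : fderiv ℝ Jj (y, t) ((0 : ℝ), (1 : ℝ)) = pdt J y t := h1.deriv.symm
    rw [h2, hsol.mass y t ht] at h1
    exact h1
  have hAs : HasDerivAt (fun s => pdyV ω y s) (D2 (0, 1) (1, 0)) t := by
    have h1 := sliceSnd hAv10
    have h2 : ((ContinuousLinearMap.apply ℝ E2 ((1 : ℝ), (0 : ℝ))).comp D2) ((0 : ℝ), (1 : ℝ))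
        = D2 (0, 1) (1, 0) := rfl
    rw [h2] at h1
    refine h1.congr_of_eventuallyEq ?_
    filter_upwards [isOpen_Ioo.mem_nhds ht] with s hs
    exact hA y s hs
  have hJinv : HasDerivAt (fun s => (J y s)⁻¹) (-(pdy u y t) / J y t ^ 2) t :=
    hJt.inv (hJpos y t ht).ne'
  have hKt : HasDerivAt (fun s => (J y s)⁻¹ • pdyV ω y s)
      ((J y t)⁻¹ • D2 (0, 1) (1, 0) + (-(pdy u y t) / J y t ^ 2) • pdyV ω y t) t :=
    hJinv.smul hAs
  have hht : HasDerivAt (fun s => h y s) (pdtV h y t) t := by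
    have h1 := sliceSnd (hHd y t ht).hasFDerivAt
    have h2 : fderiv ℝ Hj (y, t) ((0 : ℝ), (1 : ℝ)) = pdtV h y t := h1.deriv.symm
    rwa [h2] at h1
  have step3 : pdtV (Fflux mu J ω h) y t
      = mu • ((J y t)⁻¹ • D2 (0, 1) (1, 0) + (-(pdy u y t) / J y t ^ 2) • pdyV ω y t)
        + (1 / (4 * π)) • pdtV h y t := by
    show deriv (fun s => mu • ((J y s)⁻¹ • pdyV ω y s) + (1 / (4 * π)) • h y s) t = _
    exact ((hKt.const_smul mu).add (hht.const_smul (1 / (4 * π)))).deriv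
  -- equation (iv) for ∂ₜ h
  have hmag : pdtV h y t = (J y t)⁻¹ • pdyV ω y t - (pdy u y t / J y t) • h y t := by
    have := hsol.magnetic y t ht
    have h1 : pdtV h y t + (pdy u y t / J y t) • h y t = (J y t)⁻¹ • pdyV ω y t := by
      rw [← sub_eq_zero, ← this]
    rw [← h1]
    abel
  -- assemble
  rw [step3, step2, hmag, hsymm]
  show mu • ((J y t)⁻¹ • D2 (0, 1) (1, 0) + (-(pdy u y t) / J y t ^ 2) • pdyV ω y t)
        + (1 / (4 * π)) • ((J y t)⁻¹ • pdyV ω y t - (pdy u y t / J y t) • h y t)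
        - (mu / J y t) • D2 (0, 1) (1, 0)
      = (-(pdy u y t / J y t)) • (mu • ((J y t)⁻¹ • pdyV ω y t) + (1 / (4 * π)) • h y t)
        + (1 / (4 * π)) • ((J y t)⁻¹ • pdyV ω y t)
  have hc1 : mu / J y t = mu * (J y t)⁻¹ := by ring
  have hc2 : -(pdy u y t) / J y t ^ 2 = (-(pdy u y t / J y t)) * (J y t)⁻¹ := by
    field_simp
  rw [hc1, hc2]
  set M := D2 (0, 1) (1, 0)
  set A := pdyV ω y t
  set hh := h y t
  module

end
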